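/- In the network economy with inventory parameter α ≥ 0 and AR(1) demand persistence ρ with ω := 1 + α(ρ−1) ∈ [0,1], sectoral output of sector k satisfies Y_{k,t} = L̃_k B D_t + αρ [Σ_{n=0}^∞ Ã^n Σ_{i=0}^n ω^i]_k B Δ_t, where L̃ = (I−Ã)^{-1}, B is the vector of consumption shares, D_t is aggregate demand and Δ_t = D_t − D_{t−1}; this series exists and output is nonnegative for all α, ρ with α(ρ−1) ∈ [−1,0]. -/

import Mathlib

/-- In the network economy with inventory parameter `α ≥ 0`,
AR(1) persistence `ρ`, `ω = 1 + α(ρ−1) ∈ [0,1]`, and stage-n output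
`Y^n_{k,t} = [Ã^n B]_k (D_t + αρ Σ_{i≤n} ω^i Δ_t)`, total sectoral output
`Y_{k,t} = Σ_n Y^n_{k,t}` exists (the series is summable), equals
`L̃_k B D_t + αρ [Σ_n Ã^n Σ_{i≤n} ω^i]_k B Δ_t` with `L̃ = (I−Ã)⁻¹`, and is
nonnegative. -/
theorem network_sectoral_output
    {S : ℕ} (A : Matrix (Fin S) (Fin S) ℝ)
    (hA0 : ∀ k l, 0 ≤ A k l) (hBS : ∀ s, ∑ k, A k s < 1)
    (B : Fin S → ℝ) (hB : ∀ s, 0 ≤ B s)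
    (α ρ : ℝ) (hα : 0 ≤ α)
    (hrange : α * (ρ - 1) ∈ Set.Icc (-1 : ℝ) 0)
    (ω : ℝ) (hω : ω = 1 + α * (ρ - 1))
    (D : ℤ → ℝ)
    (Yn : ℕ → Fin S → ℤ → ℝ)
    (hYn : ∀ n k t, Yn n k t = ((A ^ n).mulVec B) k *
      (D t + α * ρ * (∑ i ∈ Finset.range (n + 1), ω ^ i) * (D t - D (t - 1))))
    -- demand fluctuations are small enough that each stage term is nonnegative
    (hstage : ∀ n t,
      0 ≤ D t + α * ρ * (∑ i ∈ Finset.range (n + 1), ω ^ i) * (D t - D (t - 1)))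
    (Y : Fin S → ℤ → ℝ)
    (hY : ∀ k t, Y k t = ∑' n : ℕ, Yn n k t) :
    ∀ k t,
      Summable (fun n : ℕ => Yn n k t) ∧
      Y k t = ((1 - A)⁻¹.mulVec B) k * D t +
        α * ρ * (∑' n : ℕ,
          (∑ i ∈ Finset.range (n + 1), ω ^ i) * ((A ^ n).mulVec B) k)
          * (D t - D (t - 1)) ∧
      0 ≤ Y k t := by
  intro k t
  haveI : Nonempty (Fin S) := ⟨k⟩
  -- a uniform bound on column sums
  obtain ⟨r, hrlt, hrcol⟩ : ∃ r, r < 1 ∧ ∀ l, ∑ i, A i l ≤ r := by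
    refine ⟨Finset.univ.sup' Finset.univ_nonempty (fun l : Fin S => ∑ i, A i l : Fin S → ℝ), ?_, ?_⟩
    · exact (Finset.sup'_lt_iff Finset.univ_nonempty).2 fun l _ => hBS l
    · intro l; exact Finset.le_sup' (fun l : Fin S => ∑ i, A i l) (Finset.mem_univ l)
  have hr0 : 0 ≤ r :=
    le_trans (Finset.sum_nonneg fun i _ => hA0 i k) (hrcol k)
  -- entries of powers are nonnegative
  have hpow0 : ∀ n (i j : Fin S), 0 ≤ (A ^ n) i j := by
    intro n
    induction n with
    | zero =>
      intro i j
      by_cases h : i = j <;> simp [Matrix.one_apply, h]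
    | succ n ih =>
      intro i j
      rw [pow_succ, Matrix.mul_apply]
      exact Finset.sum_nonneg fun p _ => mul_nonneg (ih i p) (hA0 p j)
  -- column sums of powers bounded by r^n
  have hcol : ∀ n (l : Fin S), ∑ i, (A ^ n) i l ≤ r ^ n := by
    intro n
    induction n with
    | zero =>
      intro l
      simp [Matrix.one_apply]
    | succ n ih =>
      intro l
      rw [pow_succ]
      calc ∑ i, (A ^ n * A) i l
          = ∑ j, (∑ i, (A ^ n) i j) * A j l := by
            simp only [Matrix.mul_apply]
            rw [Finset.sum_comm]
            simp [Finset.sum_mul]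
        _ ≤ ∑ j, r ^ n * A j l :=
            Finset.sum_le_sum fun j _ =>
              mul_le_mul_of_nonneg_right (ih j) (hA0 j l)
        _ = r ^ n * ∑ j, A j l := by rw [Finset.mul_sum]
        _ ≤ r ^ n * r :=
            mul_le_mul_of_nonneg_left (hrcol l) (pow_nonneg hr0 n)
        _ = r ^ (n + 1) := (pow_succ r n).symm
  have hentry : ∀ n (i j : Fin S), (A ^ n) i j ≤ r ^ n := fun n i j =>
    le_trans (Finset.single_le_sum (fun p _ => hpow0 n p j) (Finset.mem_univ i))
      (hcol n j)
  have hsumentry : ∀ (i j : Fin S), Summable fun n => (A ^ n) i j := fun i j =>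
    Summable.of_nonneg_of_le (fun n => hpow0 n i j) (fun n => hentry n i j)
      (summable_geometric_of_lt_one hr0 hrlt)
  -- the vector series
  set f : ℕ → ℝ := fun n => ((A ^ n).mulVec B) k with hf
  have hfeq : ∀ n, f n = ∑ l, (A ^ n) k l * B l := fun n => by
    simp [hf, Matrix.mulVec, dotProduct]
  have hf0 : ∀ n, 0 ≤ f n := fun n => by
    rw [hfeq]
    exact Finset.sum_nonneg fun l _ => mul_nonneg (hpow0 n k l) (hB l)
  set C : ℝ := ∑ l, B l with hC
  have hfle : ∀ n, f n ≤ r ^ n * C := by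
    intro n
    rw [hfeq, hC, Finset.mul_sum]
    exact Finset.sum_le_sum fun l _ =>
      mul_le_mul_of_nonneg_right (hentry n k l) (hB l)
  have hsumf : Summable f :=
    Summable.of_nonneg_of_le hf0 hfle
      ((summable_geometric_of_lt_one hr0 hrlt).mul_right C)
  -- ω is in [0,1]
  have hω0 : 0 ≤ ω := by rw [hω]; linarith [hrange.1]
  have hω1 : ω ≤ 1 := by rw [hω]; linarith [hrange.2]
  set s : ℕ → ℝ := fun n => ∑ i ∈ Finset.range (n + 1), ω ^ i with hs
  have hs0 : ∀ n, 0 ≤ s n := fun n =>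
    Finset.sum_nonneg fun i _ => pow_nonneg hω0 i
  have hsle : ∀ n, s n ≤ (n : ℝ) + 1 := by
    intro n
    calc s n ≤ ∑ _i ∈ Finset.range (n + 1), (1 : ℝ) :=
          Finset.sum_le_sum fun i _ => pow_le_one₀ hω0 hω1
      _ = (n : ℝ) + 1 := by simp
  set g : ℕ → ℝ := fun n => s n * f n with hg
  have hg0 : ∀ n, 0 ≤ g n := fun n => mul_nonneg (hs0 n) (hf0 n)
  have hgeom : Summable (fun n : ℕ => ((n : ℝ) + 1) * (r ^ n * C)) := by
    have h1 : Summable (fun n : ℕ => (n : ℝ) ^ 1 * r ^ n) :=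
      summable_pow_mul_geometric_of_norm_lt_one 1
        (by rwa [Real.norm_eq_abs, abs_of_nonneg hr0])
    have h2 := (h1.add (summable_geometric_of_lt_one hr0 hrlt)).mul_right C
    refine h2.congr fun n => ?_
    ring
  have hsumg : Summable g := by
    refine Summable.of_nonneg_of_le hg0 (fun n => ?_) hgeom
    exact mul_le_mul (hsle n) (hfle n) (hf0 n) (by positivity)
  -- rewrite Yn
  set Δ : ℝ := D t - D (t - 1) with hΔ
  have hYeq : ∀ n, Yn n k t = f n * D t + (α * ρ * Δ) * g n := by
    intro n
    rw [hYn]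
    simp only [hg, hs, hf, hΔ]
    ring
  have hsumY : Summable fun n : ℕ => Yn n k t := by
    refine Summable.congr ?_ fun n => (hYeq n).symm
    exact (hsumf.mul_right (D t)).add (hsumg.mul_left (α * ρ * Δ))
  refine ⟨hsumY, ?_, ?_⟩
  · -- the geometric-series identity for the matrix part
    have hsumfB : ∀ (i j : Fin S), Summable fun n => (A ^ n) i j * B j :=
      fun i j => (hsumentry i j).mul_right (B j)
    set M : Matrix (Fin S) (Fin S) ℝ :=
      Matrix.of fun i j => ∑' n, (A ^ n) i j with hM
    have hkey : (1 - A) * M = 1 := by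
      ext i j
      have hswap : ∑ p, A i p * ∑' n, (A ^ n) p j
          = ∑' n, (A ^ (n + 1)) i j := by
        have h1 : ∀ p : Fin S, A i p * ∑' n, (A ^ n) p j
            = ∑' n, A i p * (A ^ n) p j := fun p => (tsum_mul_left).symm
        rw [Finset.sum_congr rfl fun p _ => h1 p]
        rw [← Summable.tsum_finsetSum fun p _ => (hsumentry p j).mul_left (A i p)]
        refine tsum_congr fun n => ?_
        rw [pow_succ', Matrix.mul_apply]
      have htail : ∑' n, (A ^ n) i j
          = (A ^ 0) i j + ∑' n, (A ^ (n + 1)) i j :=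
        Summable.tsum_eq_zero_add (hsumentry i j)
      rw [Matrix.mul_apply]
      simp only [Matrix.sub_apply, sub_mul, Finset.sum_sub_distrib, hM,
        Matrix.of_apply]
      rw [hswap]
      simp only [Matrix.one_apply, ite_mul, one_mul, zero_mul,
        Finset.sum_ite_eq, Finset.mem_univ, if_true]
      rw [htail]
      simp [Matrix.one_apply]
    have hinv : (1 - A)⁻¹ = M := Matrix.inv_eq_right_inv hkey
    have hmul : ((1 - A)⁻¹.mulVec B) k = ∑' n, f n := by
      rw [hinv]
      have : (M.mulVec B) k = ∑ l, (∑' n, (A ^ n) k l) * B l := by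
        simp [hM, Matrix.mulVec, dotProduct]
      rw [this]
      have h2 : ∀ l : Fin S, (∑' n, (A ^ n) k l) * B l
          = ∑' n, (A ^ n) k l * B l := fun l => (tsum_mul_right).symm
      rw [Finset.sum_congr rfl fun l _ => h2 l,
        ← Summable.tsum_finsetSum fun l _ => hsumfB k l]
      exact tsum_congr fun n => (hfeq n).symm
    rw [hY, tsum_congr hYeq, Summable.tsum_add (hsumf.mul_right (D t))
      (hsumg.mul_left (α * ρ * Δ)), tsum_mul_right, tsum_mul_left, hmul]
    have hgsum : (∑' n, g n)
        = ∑' n : ℕ, (∑ i ∈ Finset.range (n + 1), ω ^ i) * ((A ^ n).mulVec B) k :=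
      tsum_congr fun n => rfl
    rw [hgsum]
    ring
  · rw [hY]
    refine tsum_nonneg fun n => ?_
    rw [hYn]
    exact mul_nonneg (hf0 n) (hstage n t)
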